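/- If n = 3k with k ≥ 1, then the cycle C_n has exactly 3 minimum dominating sets; that is, ζ(C_{3k}) = 3. -/

import Mathlib

open Finset SimpleGraph

/-- `S` is a dominating set of `G`: every vertex outside `S` has a neighbor in `S`. -/
def domSet {V : Type*} (G : SimpleGraph V) (S : Finset V) : Prop :=
  ∀ v, v ∉ S → ∃ u ∈ S, G.Adj u v

/-- The domination number `γ(G)`: least cardinality of a dominating set. -/
noncomputable def domNum {V : Type*} [Fintype V] (G : SimpleGraph V) : ℕ :=
  sInf {k | ∃ S : Finset V, domSet G S ∧ S.card = k}

/-- The dominion `ζ(G)`: the number of dominating sets of minimum cardinality. -/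
noncomputable def dominion {V : Type*} [Fintype V] (G : SimpleGraph V) : ℕ :=
  Nat.card {S : Finset V // domSet G S ∧ S.card = domNum G}

open Fin.CommRing

variable {m : ℕ}

def Nb (u : Fin (m+3)) : Finset (Fin (m+3)) := {u - 1, u, u + 1}

lemma mem_Nb {u v : Fin (m+3)} : v ∈ Nb u ↔ v = u - 1 ∨ v = u ∨ v = u + 1 := by
  simp [Nb]

lemma Nb_card (u : Fin (m+3)) : (Nb u).card ≤ 3 := by
  have h1 : ({u, u+1} : Finset (Fin (m+3))).card ≤ 2 := by
    apply le_trans (Finset.card_insert_le _ _); simp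
  calc (Nb u).card ≤ ({u, u+1} : Finset (Fin (m+3))).card + 1 := Finset.card_insert_le _ _
    _ ≤ 3 := by omega

lemma adj_iff {u v : Fin (m+3)} :
    (cycleGraph (m+3)).Adj u v ↔ u = v + 1 ∨ v = u + 1 := by
  rw [show (cycleGraph (m+3)) = cycleGraph ((m+1)+2) from rfl, cycleGraph_adj]
  constructor
  · rintro (h | h)
    · left; rw [sub_eq_iff_eq_add] at h; exact h.trans (add_comm _ _)
    · right; rw [sub_eq_iff_eq_add] at h; exact h.trans (add_comm _ _)
  · rintro (h | h)
    · left; rw [sub_eq_iff_eq_add]; exact h.trans (add_comm _ _)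
    · right; rw [sub_eq_iff_eq_add]; exact h.trans (add_comm _ _)

lemma val_natCast' (a : ℕ) : ((a : Fin (m+3))).val = a % (m+3) := Fin.val_natCast a (m+3)

lemma myOne_ne_zero : (1 : Fin (m+3)) ≠ 0 := by
  intro h
  have := congrArg Fin.val h
  simp at this

lemma myTwo_ne_zero : (2 : Fin (m+3)) ≠ 0 := by
  intro h
  rw [show (2 : Fin (m+3)) = ((2:ℕ) : Fin (m+3)) by norm_cast] at h
  have := congrArg Fin.val h
  rw [val_natCast', Nat.mod_eq_of_lt (by omega), Fin.val_zero] at this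
  omega

lemma dom_Nb {S : Finset (Fin (m+3))} (hS : domSet (cycleGraph (m+3)) S) (v : Fin (m+3)) :
    ∃ u ∈ S, v ∈ Nb u := by
  by_cases hv : v ∈ S
  · exact ⟨v, hv, by simp [mem_Nb]⟩
  · obtain ⟨u, hu, hadj⟩ := hS v hv
    refine ⟨u, hu, ?_⟩
    rw [adj_iff] at hadj
    rcases hadj with h | h
    · rw [mem_Nb]; left; rw [h]; ring
    · rw [mem_Nb]; right; right; exact h

lemma sum_swap_Nb (S : Finset (Fin (m+3))) :
    ∑ u ∈ S, (Nb u).card = ∑ v : Fin (m+3), (S.filter (fun u => v ∈ Nb u)).card := by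
  have h1 : ∀ u : Fin (m+3), (Nb u).card = ∑ v : Fin (m+3), if v ∈ Nb u then 1 else 0 := by
    intro u
    rw [Finset.sum_boole]
    rw [show Finset.univ.filter (fun v => v ∈ Nb u) = Nb u by ext x; simp]
    simp
  have h2 : ∀ v : Fin (m+3), (S.filter (fun u => v ∈ Nb u)).card
      = ∑ u ∈ S, if v ∈ Nb u then 1 else 0 := by
    intro v; rw [Finset.sum_boole]; simp
  simp_rw [h1, h2]
  exact Finset.sum_comm

lemma dom_card_lb {S : Finset (Fin (m+3))} (hS : domSet (cycleGraph (m+3)) S) :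
    m + 3 ≤ 3 * S.card := by
  have h1 : ∀ v : Fin (m+3), 1 ≤ (S.filter (fun u => v ∈ Nb u)).card := by
    intro v
    obtain ⟨u, hu, hv⟩ := dom_Nb hS v
    exact Finset.card_pos.mpr ⟨u, Finset.mem_filter.mpr ⟨hu, hv⟩⟩
  calc m + 3 = ∑ _v : Fin (m+3), 1 := by simp
    _ ≤ ∑ v : Fin (m+3), (S.filter (fun u => v ∈ Nb u)).card :=
        Finset.sum_le_sum (fun v _ => h1 v)
    _ = ∑ u ∈ S, (Nb u).card := (sum_swap_Nb S).symm
    _ ≤ ∑ _u ∈ S, 3 := Finset.sum_le_sum (fun u _ => Nb_card u)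
    _ = 3 * S.card := by rw [Finset.sum_const, smul_eq_mul, mul_comm]

lemma exact_one {S : Finset (Fin (m+3))} (hS : domSet (cycleGraph (m+3)) S)
    (hcard : 3 * S.card = m + 3) (v : Fin (m+3)) :
    (S.filter (fun u => v ∈ Nb u)).card = 1 := by
  have h1 : ∀ v : Fin (m+3), 1 ≤ (S.filter (fun u => v ∈ Nb u)).card := by
    intro v
    obtain ⟨u, hu, hv⟩ := dom_Nb hS v
    exact Finset.card_pos.mpr ⟨u, Finset.mem_filter.mpr ⟨hu, hv⟩⟩
  have h2 : ∑ v : Fin (m+3), (S.filter (fun u => v ∈ Nb u)).card ≤ m + 3 := by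
    calc ∑ v : Fin (m+3), (S.filter (fun u => v ∈ Nb u)).card
        = ∑ u ∈ S, (Nb u).card := (sum_swap_Nb S).symm
      _ ≤ ∑ _u ∈ S, 3 := Finset.sum_le_sum (fun u _ => Nb_card u)
      _ = m + 3 := by rw [Finset.sum_const, smul_eq_mul]; omega
  have h3 : ∑ v : Fin (m+3), (S.filter (fun u => v ∈ Nb u)).card
      = ∑ _v : Fin (m+3), 1 := by
    have := Finset.sum_le_sum (fun (v : Fin (m+3)) (_ : v ∈ Finset.univ) => h1 v)
    simp only [Finset.sum_const, Finset.card_univ, Fintype.card_fin, smul_eq_mul, mul_one] at this ⊢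
    omega
  have := (Finset.sum_eq_sum_iff_of_le (fun (v : Fin (m+3)) (_ : v ∈ Finset.univ) => h1 v)).mp h3.symm
  exact (this v (Finset.mem_univ v)).symm

lemma uniq_dom {S : Finset (Fin (m+3))} (hS : domSet (cycleGraph (m+3)) S)
    (hcard : 3 * S.card = m + 3) {v u1 u2 : Fin (m+3)} (h1 : u1 ∈ S) (h2 : u2 ∈ S)
    (hv1 : v ∈ Nb u1) (hv2 : v ∈ Nb u2) : u1 = u2 := by
  have := exact_one hS hcard v
  have hle : (S.filter (fun u => v ∈ Nb u)).card ≤ 1 := le_of_eq this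
  exact Finset.card_le_one.mp hle u1 (Finset.mem_filter.mpr ⟨h1, hv1⟩)
    u2 (Finset.mem_filter.mpr ⟨h2, hv2⟩)

lemma step3 {S : Finset (Fin (m+3))} (hS : domSet (cycleGraph (m+3)) S)
    (hcard : 3 * S.card = m + 3) {u : Fin (m+3)} (hu : u ∈ S) : u + 3 ∈ S := by
  have hn1 : u + 1 ∉ S := by
    intro h
    have : u = u + 1 := uniq_dom (v := u) hS hcard hu h (by simp [mem_Nb]) (by rw [mem_Nb]; left; ring)
    have h0 : (1 : Fin (m+3)) = 0 := by
      have := congrArg (· - u) this; simpa using this.symm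
    exact myOne_ne_zero h0
  have hn2 : u + 2 ∉ S := by
    intro h
    have : u = u + 2 := uniq_dom (v := u + 1) hS hcard hu h (by rw [mem_Nb]; right; right; rfl)
      (by rw [mem_Nb]; left; ring)
    have h0 : (2 : Fin (m+3)) = 0 := by
      have := congrArg (· - u) this; simpa using this.symm
    exact myTwo_ne_zero h0
  have hv : u + 2 ∉ S := hn2
  obtain ⟨w, hw, hmem⟩ := dom_Nb hS (u + 2)
  rw [mem_Nb] at hmem
  rcases hmem with h | h | h
  · have : w = u + 3 := by
      have := congrArg (· + 1) h
      rw [sub_add_cancel] at this; rw [← this]; ring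
    rwa [← this]
  · exact absurd (h ▸ hw) hn2
  · have : w = u + 1 := by
      have := congrArg (· - 1) h
      rw [add_sub_cancel_right] at this; rw [← this]; ring
    exact absurd ((this ▸ hw)) hn1

lemma orbit_mem {S : Finset (Fin (m+3))} (hS : domSet (cycleGraph (m+3)) S)
    (hcard : 3 * S.card = m + 3) {u : Fin (m+3)} (hu : u ∈ S) (t : ℕ) :
    u + ((3 * t : ℕ) : Fin (m+3)) ∈ S := by
  induction t with
  | zero => simpa using hu
  | succ t ih =>
      have : u + ((3 * (t+1) : ℕ) : Fin (m+3)) = (u + ((3 * t : ℕ) : Fin (m+3))) + 3 := by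
        push_cast; ring
      rw [this]
      exact step3 hS hcard ih

def Cr (m r : ℕ) : Finset (Fin (m+3)) := Finset.univ.filter (fun v => v.val % 3 = r)

lemma mem_Cr {r : ℕ} {v : Fin (m+3)} : v ∈ Cr m r ↔ v.val % 3 = r := by simp [Cr]

lemma card_Cr (h3 : 3 ∣ (m+3)) {r : ℕ} (hr : r < 3) : (Cr m r).card = (m+3)/3 := by
  rw [show (m+3)/3 = (Finset.univ : Finset (Fin ((m+3)/3))).card by simp]
  refine Finset.card_nbij' (fun v => (⟨v.val / 3, by omega⟩ : Fin ((m+3)/3)))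
    (fun i => (⟨3 * i.val + r, by omega⟩ : Fin (m+3))) ?_ ?_ ?_ ?_
  · intro v _; exact Finset.mem_univ _
  · intro i _; rw [Finset.mem_coe, mem_Cr]; simp; omega
  · intro v hv; rw [Finset.mem_coe, mem_Cr] at hv; apply Fin.ext; simp; omega
  · intro i _; apply Fin.ext; simp; omega

lemma Cr_dominating (h3 : 3 ∣ (m+3)) {r : ℕ} (hr : r < 3) :
    domSet (cycleGraph (m+3)) (Cr m r) := by
  intro v hv
  rw [mem_Cr] at hv
  by_cases h1 : (v.val + 1) % 3 = r
  · refine ⟨v + 1, ?_, ?_⟩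
    · rw [mem_Cr]
      have : (v + 1).val = (v.val + 1) % (m + 3) := by
        rw [Fin.add_def]; simp
      rw [this, Nat.mod_mod_of_dvd _ h3]
      exact h1
    · rw [adj_iff]; left; rfl
  · refine ⟨v - 1, ?_, ?_⟩
    · rw [mem_Cr]
      have hsub : v - 1 = v + (((m+2 : ℕ)) : Fin (m+3)) := by
        have : (((m+2 : ℕ)) : Fin (m+3)) = -1 := by
          have : (((m+3 : ℕ)) : Fin (m+3)) = 0 := Fin.natCast_self _
          push_cast at this ⊢
          linear_combination this
        rw [this]; ring
      rw [hsub]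
      have hval : (v + (((m+2 : ℕ)) : Fin (m+3))).val = (v.val + (m+2)) % (m+3) := by
        rw [Fin.val_add, val_natCast', Nat.add_mod_mod]
      rw [hval, Nat.mod_mod_of_dvd _ h3]
      omega
    · rw [adj_iff]; right; rw [sub_add_cancel]

lemma classify (h3 : 3 ∣ (m+3)) {S : Finset (Fin (m+3))} (hS : domSet (cycleGraph (m+3)) S)
    (hcard : 3 * S.card = m + 3) : ∃ r < 3, S = Cr m r := by
  have hne : S.Nonempty := by
    rw [← Finset.card_pos]; omega
  obtain ⟨u, hu⟩ := hne
  refine ⟨u.val % 3, Nat.mod_lt _ (by omega), ?_⟩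
  have hsub : Cr m (u.val % 3) ⊆ S := by
    intro v hv
    rw [mem_Cr] at hv
    have hvlt : v.val < m + 3 := v.isLt
    have hult : u.val < m + 3 := u.isLt
    have hdvd : 3 ∣ (v.val + (m+3) - u.val) := by omega
    set d := v.val + (m+3) - u.val with hd
    have h3t : 3 * (d / 3) = d := by omega
    have hv' : u + ((3 * (d/3) : ℕ) : Fin (m+3)) = v := by
      rw [h3t]
      have hsum : ((d + u.val : ℕ) : Fin (m+3)) = ((v.val + (m+3) : ℕ) : Fin (m+3)) := by
        congr 1; omega
      push_cast at hsum
      have hz : ((m : Fin (m+3)) + 3) = 0 := by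
        have := Fin.natCast_self (m+3)
        push_cast at this
        linear_combination this
      linear_combination hsum + hz
    rw [← hv']
    exact orbit_mem hS hcard hu _
  apply (Finset.eq_of_subset_of_card_le hsub ?_).symm
  rw [card_Cr h3 (Nat.mod_lt _ (by omega))]
  omega

lemma domNum_eq (h3 : 3 ∣ (m+3)) : domNum (cycleGraph (m+3)) = (m+3)/3 := by
  have hmem : (m+3)/3 ∈ {j | ∃ S : Finset (Fin (m+3)), domSet (cycleGraph (m+3)) S ∧ S.card = j} :=
    ⟨Cr m 0, Cr_dominating h3 (by omega), card_Cr h3 (by omega)⟩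
  apply le_antisymm
  · exact Nat.sInf_le hmem
  · apply le_csInf ⟨_, hmem⟩
    rintro b ⟨S, hS, rfl⟩
    have := dom_card_lb hS
    omega

lemma Cr_ne {r r' : ℕ} (hr : r < 3) (hr' : r' < 3) (h : r ≠ r') : Cr m r ≠ Cr m r' := by
  intro he
  have h1 : (⟨r, by omega⟩ : Fin (m+3)) ∈ Cr m r := by rw [mem_Cr]; simp; omega
  rw [he, mem_Cr] at h1
  simp at h1; omega

theorem stmt11' (k : ℕ) (hk : 1 ≤ k) : dominion (cycleGraph (3 * k)) = 3 := by
  obtain ⟨m, hm⟩ : ∃ m, 3 * k = m + 3 := ⟨3 * k - 3, by omega⟩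
  rw [hm]
  have h3 : 3 ∣ (m+3) := by omega
  have hdom : domNum (cycleGraph (m+3)) = (m+3)/3 := domNum_eq h3
  have hset : {S : Finset (Fin (m+3)) | domSet (cycleGraph (m+3)) S
      ∧ S.card = domNum (cycleGraph (m+3))} = {Cr m 0, Cr m 1, Cr m 2} := by
    ext S
    simp only [Set.mem_setOf_eq, Set.mem_insert_iff, Set.mem_singleton_iff, hdom]
    constructor
    · rintro ⟨hS, hc⟩
      obtain ⟨r, hr, rfl⟩ := classify h3 hS (by omega)
      interval_cases r
      · left; rfl
      · right; left; rfl
      · right; right; rfl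
    · rintro (rfl | rfl | rfl) <;>
        exact ⟨Cr_dominating h3 (by omega), card_Cr h3 (by omega)⟩
  have hdd : dominion (cycleGraph (m+3)) = Set.ncard {S : Finset (Fin (m+3)) |
      domSet (cycleGraph (m+3)) S ∧ S.card = domNum (cycleGraph (m+3))} := by
    rw [dominion, ← Nat.card_coe_set_eq]
    rfl
  rw [hdd, hset]
  rw [Set.ncard_insert_of_notMem, Set.ncard_pair (Cr_ne (by omega) (by omega) (by omega))]
  simp only [Set.mem_insert_iff, Set.mem_singleton_iff]
  push_neg
  exact ⟨Cr_ne (by omega) (by omega) (by omega), Cr_ne (by omega) (by omega) (by omega)⟩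

theorem stmt11 (n k : ℕ) (hk : 1 ≤ k) (hn : n = 3 * k) :
    dominion (cycleGraph n) = 3 := by
  subst hn
  exact stmt11' k hk
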